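/- Let 0 < α < 1, h > 0, λ > 0 and set z₀ = i(1-α)π. Then the residue at z₀ of f₁(z) = ((1 + e^{-z/α}h^{1/α}λ)(e^{-2z} + 2e^{-z}cos(απ) + 1))^{-1} equals i e^{-iαπ} / (2 sin(απ)(1 - e^{-iπ/α}h^{1/α}λ)), provided 1 - e^{-iπ/α}h^{1/α}λ ≠ 0. -/

import Mathlib

open Real Complex Filter Topology

/-- Residue of `f₁` at the simple pole `z₀ = i(1-α)π`, expressed as the limit of
`(z - z₀) f₁(z)` as `z → z₀`. -/
theorem stmt_16 (α h lam : ℝ) (hα0 : 0 < α) (hα1 : α < 1) (hh : 0 < h) (hlam : 0 < lam)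
    (z₀ : ℂ) (hz₀ : z₀ = (((1 - α) * π : ℝ) : ℂ) * Complex.I)
    (hden : 1 - Complex.exp (-(π / α : ℝ) * Complex.I) * ((h ^ (1 / α) * lam : ℝ) : ℂ) ≠ 0) :
    Filter.Tendsto
      (fun z : ℂ => (z - z₀) *
        ((1 + Complex.exp (-z / (α : ℂ)) * ((h ^ (1 / α) * lam : ℝ) : ℂ)) *
          (Complex.exp (-2 * z) + 2 * Complex.exp (-z) * ((Real.cos (α * π) : ℝ) : ℂ) + 1))⁻¹)
      (nhdsWithin z₀ {z₀}ᶜ)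
      (nhds (Complex.I * Complex.exp (-(α * π : ℝ) * Complex.I) /
        (2 * ((Real.sin (α * π) : ℝ) : ℂ) *
          (1 - Complex.exp (-(π / α : ℝ) * Complex.I) * ((h ^ (1 / α) * lam : ℝ) : ℂ))))) := by
  have hαC : (α : ℂ) ≠ 0 := by exact_mod_cast hα0.ne'
  set m : ℂ := ((h ^ (1 / α) * lam : ℝ) : ℂ) with hm
  set c : ℂ := ((Real.cos (α * π) : ℝ) : ℂ) with hc
  set s : ℂ := ((Real.sin (α * π) : ℝ) : ℂ) with hsdef
  have hsR : Real.sin (α * π) ≠ 0 :=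
    ne_of_gt (Real.sin_pos_of_pos_of_lt_pi (by positivity) (by nlinarith [Real.pi_pos]))
  have hsC : s ≠ 0 := by simpa [hsdef] using Complex.ofReal_ne_zero.mpr hsR
  set e : ℂ := Complex.exp (((α * π : ℝ) : ℂ) * Complex.I) with hedef
  have he : e = c + s * Complex.I := by
    rw [hedef, Complex.exp_mul_I, hc, hsdef, Complex.ofReal_cos, Complex.ofReal_sin]
  have heN : e ≠ 0 := Complex.exp_ne_zero _
  have pyth : c ^ 2 + s ^ 2 = 1 := by
    rw [hc, hsdef]
    push_cast
    exact_mod_cast Real.cos_sq_add_sin_sq (α * π)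
  have h1 : Complex.exp (-z₀) = -e := by
    have harg : -z₀ = ((α * π : ℝ) : ℂ) * Complex.I + -(↑Real.pi * Complex.I) := by
      rw [hz₀]; push_cast; ring
    rw [harg, Complex.exp_add, Complex.exp_neg, Complex.exp_pi_mul_I, hedef]
    ring
  have h2 : Complex.exp (-2 * z₀) = e ^ 2 := by
    have : (-2 : ℂ) * z₀ = -z₀ + -z₀ := by ring
    rw [this, Complex.exp_add, h1]; ring
  have h3 : Complex.exp (-z₀ / (α : ℂ)) = -Complex.exp (-(π / α : ℝ) * Complex.I) := by
    have harg : -z₀ / (α : ℂ) = ↑Real.pi * Complex.I + -(π / α : ℝ) * Complex.I := by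
      rw [hz₀]; push_cast; field_simp; ring
    rw [harg, Complex.exp_add, Complex.exp_pi_mul_I]; ring
  set D : ℂ := 1 - Complex.exp (-(π / α : ℝ) * Complex.I) * m with hD
  set g : ℂ → ℂ := fun z => Complex.exp (-2 * z) + 2 * Complex.exp (-z) * c + 1 with hg
  have hg0 : g z₀ = 0 := by
    rw [hg]; simp only [h1, h2, he]
    linear_combination s ^ 2 * Complex.I_sq + (-1) * pyth
  set G' : ℂ := -2 * Complex.I * s * e with hG'
  have hGne : G' ≠ 0 := by
    rw [hG']
    simp [Complex.I_ne_zero, hsC, heN]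
  have hder : HasDerivAt g G' z₀ := by
    have d1 : HasDerivAt (fun z : ℂ => Complex.exp (-2 * z))
        (Complex.exp (-2 * z₀) * (-2)) z₀ := by
      have : HasDerivAt (fun z : ℂ => -2 * z) (-2) z₀ := by
        simpa using (hasDerivAt_id z₀).const_mul (-2 : ℂ)
      exact this.cexp
    have d2 : HasDerivAt (fun z : ℂ => Complex.exp (-z)) (Complex.exp (-z₀) * (-1)) z₀ := by
      have : HasDerivAt (fun z : ℂ => -z) (-1) z₀ := (hasDerivAt_id z₀).neg
      exact this.cexp
    have d3 : HasDerivAt g (Complex.exp (-2 * z₀) * (-2) + 2 * (Complex.exp (-z₀) * (-1)) * c)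
        z₀ := ((d1.add ((d2.const_mul 2).mul_const c)).add_const 1)
    convert d3 using 1
    rw [h1, h2, hG', he]
    ring
  have hslope : Tendsto (fun z : ℂ => g z / (z - z₀)) (𝓝[≠] z₀) (𝓝 G') := by
    have := hasDerivAt_iff_tendsto_slope.mp hder
    refine this.congr (fun z => ?_)
    simp [slope_def_field, hg0]
  have hinv : Tendsto (fun z : ℂ => (g z / (z - z₀))⁻¹) (𝓝[≠] z₀) (𝓝 G'⁻¹) :=
    hslope.inv₀ hGne
  have hval : 1 + Complex.exp (-z₀ / (α : ℂ)) * m = D := by rw [h3, hD]; ring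
  have hA : Tendsto (fun z : ℂ => (1 + Complex.exp (-z / (α : ℂ)) * m)⁻¹) (𝓝[≠] z₀)
      (𝓝 D⁻¹) := by
    have hcont : ContinuousAt (fun z : ℂ => 1 + Complex.exp (-z / (α : ℂ)) * m) z₀ := by
      fun_prop
    have h4 := (hcont.inv₀ (by rw [hval]; exact hden)).tendsto
    rw [← hval]; exact h4.mono_left nhdsWithin_le_nhds
  have hmul : Tendsto (fun z : ℂ => (g z / (z - z₀))⁻¹ * (1 + Complex.exp (-z / (α : ℂ)) * m)⁻¹)
      (𝓝[≠] z₀) (𝓝 (G'⁻¹ * D⁻¹)) := hinv.mul hA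
  have hexp : Complex.exp (-(α * π : ℝ) * Complex.I) = e⁻¹ := by
    rw [hedef, ← Complex.exp_neg]; push_cast; ring_nf
  clear_value m c s e D g G'
  have hval2 : G'⁻¹ * D⁻¹ = Complex.I * Complex.exp (-(α * π : ℝ) * Complex.I) / (2 * s * D) := by
    rw [hexp, hG']
    have hI := Complex.I_ne_zero
    have hIi : Complex.I⁻¹ = -Complex.I := Complex.inv_I
    have he1 : e * e⁻¹ = 1 := mul_inv_cancel₀ heN
    have hs1 : s * s⁻¹ = 1 := mul_inv_cancel₀ hsC
    have hD1 : D * D⁻¹ = 1 := mul_inv_cancel₀ hden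
    rw [div_eq_mul_inv]
    simp only [mul_inv, hIi]
    ring
  rw [← hval2]
  refine hmul.congr fun z => ?_
  simp only [hg]
  rw [div_eq_mul_inv, mul_inv, mul_inv, inv_inv]
  ring
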